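/- Let Γ be a monoid with a finitely generated filtration {Γ_i} (i.e., each Γ_i is finite, 1 ∈ Γ_0, Γ_i·Γ_j ⊆ Γ_{i+j}, ∪Γ_i = Γ, and there is m such that Γ_i = ∪_{j=1}^m Γ_j · Γ_{i−j} for all i > m), and let L be a field. Then the Rees ring R(L[Γ]) = ⊕_i L[Γ_i] t^i is a finitely generated L-algebra; in particular if Γ is commutative then both L[Γ] and R(L[Γ]) are Noetherian. -/

import Mathlib

open Pointwise Polynomial MonoidAlgebra

set_option maxHeartbeats 1000000

/-- Let `Γ` be a monoid with a finitely generated filtration `{Γ_i}`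
(each `Γ_i` finite, `1 ∈ Γ_0`, increasing, `Γ_i·Γ_j ⊆ Γ_{i+j}`, exhaustive, and
`Γ_i = ⋃_{j=1}^m Γ_j·Γ_{i−j}` for `i > m`), and let `L` be a field.  Then the Rees ring
`R(L[Γ]) = ⊕_i L[Γ_i] tⁱ` — realized inside `L[Γ][t]` as the set of polynomials whose `i`-th
coefficient is supported on `Γ_i` — is a finitely generated `L`-algebra; in particular, if `Γ`
is commutative then both `L[Γ]` and `R(L[Γ])` are Noetherian. -/
theorem rees_ring_of_monoid_algebra_finitely_generated
    (G : Type*) [Monoid G] (L : Type*) [Field L]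
    (Γi : ℕ → Finset G)
    (hone : (1 : G) ∈ Γi 0)
    (hmono : ∀ i, Γi i ⊆ Γi (i + 1))
    (hmul : ∀ i j, ∀ x ∈ Γi i, ∀ y ∈ Γi j, x * y ∈ Γi (i + j))
    (hcover : ∀ g : G, ∃ i, g ∈ Γi i)
    (hfg : ∃ m : ℕ, 1 ≤ m ∧ ∀ i > m,
      (Γi i : Set G) = ⋃ j ∈ Finset.Icc 1 m, (Γi j : Set G) * (Γi (i - j) : Set G)) :
    (∃ S : Finset (Polynomial (MonoidAlgebra L G)),
      ((Algebra.adjoin L (S : Set (Polynomial (MonoidAlgebra L G)))) :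
          Set (Polynomial (MonoidAlgebra L G))) =
        {p : Polynomial (MonoidAlgebra L G) | ∀ i : ℕ, ∀ g ∈ (p.coeff i).coeff.support, g ∈ Γi i}) ∧
    ((∀ a b : G, a * b = b * a) →
      IsNoetherianRing (MonoidAlgebra L G) ∧
      ∀ A : Subalgebra L (Polynomial (MonoidAlgebra L G)),
        (A : Set (Polynomial (MonoidAlgebra L G))) =
          {p : Polynomial (MonoidAlgebra L G) | ∀ i : ℕ, ∀ g ∈ (p.coeff i).coeff.support, g ∈ Γi i} →
        IsNoetherianRing A) := by
  classical
  obtain ⟨m, hm1, hm⟩ := hfg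
  set Rset : Set (Polynomial (MonoidAlgebra L G)) :=
    {p | ∀ i : ℕ, ∀ g ∈ (p.coeff i).coeff.support, g ∈ Γi i} with hRsetdef
  -- monomials with admissible support are in Rset
  have hmono_mem : ∀ (i : ℕ) (g : G) (c : L), g ∈ Γi i →
      (Polynomial.monomial i (MonoidAlgebra.single g c)) ∈ Rset := by
    intro i g c hg j x hx
    rw [Polynomial.coeff_monomial] at hx
    split_ifs at hx with hij
    · have := Finsupp.support_single_subset hx
      rw [Finset.mem_singleton] at this
      subst this; subst hij; exact hg
    · simp at hx
  -- the finite generating set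
  let S : Finset (Polynomial (MonoidAlgebra L G)) :=
    (Finset.range (m + 1)).biUnion fun i =>
      (Γi i).image fun g => Polynomial.monomial i (MonoidAlgebra.single g (1 : L))
  have hS_mem : ∀ i ≤ m, ∀ g ∈ Γi i,
      Polynomial.monomial i (MonoidAlgebra.single g (1 : L)) ∈ S := by
    intro i hi g hg
    exact Finset.mem_biUnion.2 ⟨i, Finset.mem_range.2 (Nat.lt_succ_of_le hi),
      Finset.mem_image.2 ⟨g, hg, rfl⟩⟩
  -- key: all admissible monomials are in the adjoin
  have hkey : ∀ i : ℕ, ∀ g ∈ Γi i,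
      Polynomial.monomial i (MonoidAlgebra.single g (1 : L)) ∈ Algebra.adjoin L (S : Set _) := by
    intro i
    induction i using Nat.strong_induction_on with
    | _ i ih =>
      intro g hg
      by_cases him : i ≤ m
      · exact Algebra.subset_adjoin (hS_mem i him g hg)
      · push_neg at him
        have := (hm i him) ▸ (Finset.mem_coe.2 hg)
        rw [Set.mem_iUnion₂] at this
        obtain ⟨j, hj, hgj⟩ := this
        rw [Finset.mem_Icc] at hj
        obtain ⟨x, hx, y, hy, hxy⟩ := Set.mem_mul.1 hgj
        have hji : j + (i - j) = i := Nat.add_sub_cancel' (le_trans hj.2 him.le)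
        have : Polynomial.monomial i (MonoidAlgebra.single g (1 : L)) =
            Polynomial.monomial j (MonoidAlgebra.single x (1 : L)) *
            Polynomial.monomial (i - j) (MonoidAlgebra.single y (1 : L)) := by
          rw [Polynomial.monomial_mul_monomial, MonoidAlgebra.single_mul_single, one_mul,
            hji, hxy]
        rw [this]
        exact mul_mem (Algebra.subset_adjoin (hS_mem j hj.2 x hx))
          (ih (i - j) (by omega) y hy)
  -- Rset ⊆ adjoin
  have hsub1 : Rset ⊆ SetLike.coe (Algebra.adjoin L (S : Set (Polynomial (MonoidAlgebra L G)))) := by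
    intro p hp
    have hdec : p = p.sum fun n a => Polynomial.monomial n a := (Polynomial.sum_monomial_eq p).symm
    rw [hdec]
    apply Subalgebra.sum_mem
    intro n hn
    -- monomial n (p.coeff n) ∈ adjoin
    have hcdec : p.coeff n = (p.coeff n).coeff.sum fun g c => MonoidAlgebra.single g c :=
      (MonoidAlgebra.sum_coeff_single _).symm
    show (Polynomial.monomial n) (p.coeff n) ∈ _
    rw [hcdec, Finsupp.sum, map_sum]
    apply Subalgebra.sum_mem
    intro g hgs
    have h1 : MonoidAlgebra.single g ((p.coeff n).coeff g) =
        ((p.coeff n).coeff g) • MonoidAlgebra.single g (1 : L) := by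
      rw [MonoidAlgebra.smul_single', mul_one]
    rw [h1, ← Polynomial.smul_monomial]
    exact Subalgebra.smul_mem _ (hkey n g (hp n g hgs)) _
  -- adjoin ⊆ Rset : show Rset is a subalgebra
  have hgen_sub : (S : Set _) ⊆ Rset := by
    intro s hs
    rw [Finset.mem_coe, Finset.mem_biUnion] at hs
    obtain ⟨i, -, hs⟩ := hs
    obtain ⟨g, hg, rfl⟩ := Finset.mem_image.1 hs
    exact hmono_mem i g 1 hg
  let Rsub : Subalgebra L (Polynomial (MonoidAlgebra L G)) :=
  { carrier := Rset
    zero_mem' := by intro i g hg; simp at hg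
    add_mem' := by
      intro p q hp hq i g hg
      rw [Polynomial.coeff_add, MonoidAlgebra.coeff_add] at hg
      rcases Finset.mem_union.1 (Finsupp.support_add hg) with h | h
      · exact hp i g h
      · exact hq i g h
    one_mem' := by
      intro i g hg
      rw [Polynomial.coeff_one] at hg
      split_ifs at hg with h
      · rw [MonoidAlgebra.one_def] at hg
        have := Finsupp.support_single_subset hg
        rw [Finset.mem_singleton] at this
        subst this; subst h; exact hone
      · simp at hg
    mul_mem' := by
      intro p q hp hq i g hg
      rw [Polynomial.coeff_mul, MonoidAlgebra.coeff_sum] at hg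
      obtain ⟨⟨j, k⟩, hjk, hg⟩ := Finsupp.mem_support_finset_sum g hg
      have := MonoidAlgebra.support_coeff_mul_subset (p.coeff j) (q.coeff k) hg
      obtain ⟨x, hx, y, hy, rfl⟩ := Finset.mem_mul.1 this
      have hjki : j + k = i := Finset.HasAntidiagonal.mem_antidiagonal.1 hjk
      exact hjki ▸ hmul j k x (hp j x hx) y (hq k y hy)
    algebraMap_mem' := by
      intro c i g hg
      rw [Polynomial.algebraMap_apply, Polynomial.coeff_C] at hg
      split_ifs at hg with h
      · have h2 : (algebraMap L (MonoidAlgebra L G)) c = MonoidAlgebra.single 1 c := rfl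
        rw [h2] at hg
        have := Finsupp.support_single_subset hg
        rw [Finset.mem_singleton] at this
        subst this; subst h; exact hone
      · simp at hg }
  have hsub2 : SetLike.coe (Algebra.adjoin L (S : Set (Polynomial (MonoidAlgebra L G)))) ⊆ Rset := by
    have hle : Algebra.adjoin L (S : Set (Polynomial (MonoidAlgebra L G))) ≤ Rsub :=
      Algebra.adjoin_le hgen_sub
    exact fun x hx => hle hx
  have hadj : ((Algebra.adjoin L (S : Set (Polynomial (MonoidAlgebra L G)))) : Set _) = Rset :=
    Set.Subset.antisymm hsub2 hsub1
  refine ⟨⟨S, hadj⟩, ?_⟩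
  intro hcomm
  letI : CommMonoid G := { (inferInstance : Monoid G) with mul_comm := hcomm }
  -- the evaluation-at-1 algebra hom
  let φ : Polynomial (MonoidAlgebra L G) →ₐ[L] MonoidAlgebra L G :=
    (Polynomial.aeval (1 : MonoidAlgebra L G)).restrictScalars L
  have hφ : ∀ (i : ℕ) (a : MonoidAlgebra L G), φ (Polynomial.monomial i a) = a := by
    intro i a
    simp [φ, Polynomial.aeval_monomial]
  -- image subalgebra
  have htop : (Algebra.adjoin L (S : Set _)).map φ = ⊤ := by
    rw [eq_top_iff]
    intro a _
    induction a using MonoidAlgebra.induction with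
    | zero => exact zero_mem _
    | single_add g c f _ _ hf =>
      refine add_mem ?_ (hf Algebra.mem_top)
      obtain ⟨i, hgi⟩ := hcover g
      refine ⟨Polynomial.monomial i (MonoidAlgebra.single g c), ?_, hφ i _⟩
      exact hsub1 (hmono_mem i g c hgi)
  haveI hft : Algebra.FiniteType L (MonoidAlgebra L G) := by
    refine ⟨⟨S.image φ, ?_⟩⟩
    rw [Finset.coe_image, ← AlgHom.map_adjoin, htop]
  constructor
  · exact Algebra.FiniteType.isNoetherianRing L (MonoidAlgebra L G)
  · intro A hA
    have hAS : A = Algebra.adjoin L (S : Set _) := by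
      apply SetLike.ext'
      rw [hA, hadj]
    haveI : Algebra.FiniteType L A := by
      rw [← Subalgebra.fg_iff_finiteType]
      exact ⟨S, hAS.symm⟩
    exact Algebra.FiniteType.isNoetherianRing L A
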